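/- arXiv:2503.13099 — 4 statements merged into one kernel-verified Lean document; each statement's English description precedes it below -/
import Mathlib

section
/- Suppose F = f + μc with f convex smooth with L-Lipschitz gradient and c convex, and let Δ_k = d_kᵀ∇f(x_k) + μ(c(x_k + d_k) − c(x_k)) < 0. If x_{k+1} = x_k + α_k d_k with α_k ∈ (0,1] satisfies the semi-monotone sufficient descent condition ν(α_k)|1 − λ(α_k)| ≥ θ, where ν(α_k) = (F(x_{k+1}) − F(x_k))/(α_k Δ_k), λ(α_k) = (F(x_{k+1}) − R_k)/(α_k Δ_k) with R_k ≥ F(x_k), and additionally F(x_{k+1}) − R_k ≥ −(α_k²/2)L‖d_k‖² + α_k Δ_k, then for any step size α_k' with F(x_k + α_k' d_k) ≤ F(x_{k+1}) we have (F(x_k) − F(x_k + α_k' d_k))·‖d_k‖²/Δ_k² ≥ 2θ/L. -/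
open RealInnerProductSpace

theorem descent_lemma (n : ℕ) (f : EuclideanSpace ℝ (Fin n) → ℝ)
    (g : EuclideanSpace ℝ (Fin n) → EuclideanSpace ℝ (Fin n))
    (hdiff : ∀ x, HasGradientAt f (g x) x)
    (L : ℝ) (hL : 0 < L) (hlip : ∀ x y, ‖g x - g y‖ ≤ L * ‖x - y‖)
    (x v : EuclideanSpace ℝ (Fin n)) :
    f (x + v) ≤ f x + ⟪g x, v⟫ + L / 2 * ‖v‖ ^ 2 := by
  have hφ : ∀ t : ℝ, HasDerivAt (fun t : ℝ => f (x + t • v)) ⟪g (x + t • v), v⟫ t := by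
    intro t
    have h1 : HasDerivAt (fun t : ℝ => x + t • v) v t := by
      simpa using ((hasDerivAt_id t).smul_const v).const_add x
    have h2 := ((hdiff (x + t • v)).hasFDerivAt).comp_hasDerivAt t h1
    simpa [InnerProductSpace.toDual_apply_apply, Function.comp_def] using h2
  have hgcont : Continuous g := by
    have : LipschitzWith (Real.toNNReal L) g := by
      apply LipschitzWith.of_dist_le_mul
      intro a b
      simpa [dist_eq_norm, Real.coe_toNNReal L hL.le] using hlip a b
    exact this.continuous
  have hcont : Continuous (fun t : ℝ => ⟪g (x + t • v), v⟫) := by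
    exact (Continuous.inner (hgcont.comp (by continuity)) continuous_const)
  have hint : IntervalIntegrable (fun t : ℝ => ⟪g (x + t • v), v⟫) MeasureTheory.volume 0 1 :=
    hcont.intervalIntegrable 0 1
  have hfund : f (x + v) - f x = ∫ t in (0:ℝ)..1, ⟪g (x + t • v), v⟫ := by
    have := intervalIntegral.integral_eq_sub_of_hasDerivAt (f := fun t : ℝ => f (x + t • v))
      (fun t _ => hφ t) hint
    simpa using this.symm
  have hbound : ∀ t ∈ Set.Icc (0:ℝ) 1, ⟪g (x + t • v), v⟫ ≤ ⟪g x, v⟫ + t * (L * ‖v‖ ^ 2) := by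
    intro t ht
    have h1 : ⟪g (x + t • v) - g x, v⟫ ≤ ‖g (x + t • v) - g x‖ * ‖v‖ :=
      real_inner_le_norm _ _
    have h2 : ‖g (x + t • v) - g x‖ ≤ L * (t * ‖v‖) := by
      have := hlip (x + t • v) x
      simpa [norm_smul, abs_of_nonneg ht.1, mul_assoc] using this
    have h3 : ⟪g (x + t • v) - g x, v⟫ = ⟪g (x + t • v), v⟫ - ⟪g x, v⟫ :=
      inner_sub_left _ _ _
    nlinarith [norm_nonneg v, norm_nonneg (g (x + t • v) - g x)]
  have hintbound : (∫ t in (0:ℝ)..1, ⟪g (x + t • v), v⟫)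
      ≤ ∫ t in (0:ℝ)..1, (⟪g x, v⟫ + t * (L * ‖v‖ ^ 2)) := by
    apply intervalIntegral.integral_mono_on (by norm_num) hint
    · exact (Continuous.intervalIntegrable (by continuity) 0 1)
    · exact hbound
  have hcomp : (∫ t in (0:ℝ)..1, (⟪g x, v⟫ + t * (L * ‖v‖ ^ 2)))
      = ⟪g x, v⟫ + L / 2 * ‖v‖ ^ 2 := by
    rw [intervalIntegral.integral_add (intervalIntegrable_const)
      (((by fun_prop : Continuous fun t : ℝ => t * (L * ‖v‖ ^ 2)).intervalIntegrable 0 1))]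
    simp [intervalIntegral.integral_mul_const, integral_id]
    ring
  linarith [hfund, hintbound, hcomp.le, hcomp.ge]

set_option maxHeartbeats 1600000 in
/-- Theorem 1: bounded gain in the target function under the semi-monotone
sufficient descent condition. -/
theorem bounded_gain (n : ℕ) (f c : EuclideanSpace ℝ (Fin n) → ℝ)
    (g : EuclideanSpace ℝ (Fin n) → EuclideanSpace ℝ (Fin n))
    (hf : ConvexOn ℝ Set.univ f) (hdiff : ∀ x, HasGradientAt f (g x) x)
    (L : ℝ) (hL : 0 < L) (hlip : ∀ x y, ‖g x - g y‖ ≤ L * ‖x - y‖)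
    (hc : ConvexOn ℝ Set.univ c) (μ : ℝ) (hμ : 0 < μ) (θ : ℝ) (hθ : 0 < θ)
    (F : EuclideanSpace ℝ (Fin n) → ℝ) (hF : ∀ x, F x = f x + μ * c x)
    (xk dk : EuclideanSpace ℝ (Fin n)) (Δ : ℝ)
    (hΔdef : Δ = ⟪dk, g xk⟫ + μ * (c (xk + dk) - c xk)) (hΔ : Δ < 0)
    (α : ℝ) (hα0 : 0 < α) (hα1 : α ≤ 1)
    (x1 : EuclideanSpace ℝ (Fin n)) (hx1 : x1 = xk + α • dk)
    (R : ℝ) (hR : F xk ≤ R)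
    (hsuf : ((F x1 - F xk) / (α * Δ)) * |1 - (F x1 - R) / (α * Δ)| ≥ θ)
    (hlow : F x1 - R ≥ -(α ^ 2 / 2) * L * ‖dk‖ ^ 2 + α * Δ) :
    ∀ α' : ℝ, F (xk + α' • dk) ≤ F x1 →
      (F xk - F (xk + α' • dk)) * ‖dk‖ ^ 2 / Δ ^ 2 ≥ 2 * θ / L := by
  set s : ℝ := α ^ 2 * L / 2 * ‖dk‖ ^ 2 with hs
  have hs0 : 0 ≤ s := by positivity
  have ht : α * Δ < 0 := mul_neg_of_pos_of_neg hα0 hΔ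
  have htne : α * Δ ≠ 0 := ht.ne
  -- key1 : F x1 ≤ F xk + α * Δ + s
  have hfdesc : f (xk + α • dk) ≤ f xk + α * ⟪dk, g xk⟫ + s := by
    have h := descent_lemma n f g hdiff L hL hlip xk (α • dk)
    have h1 : ⟪g xk, α • dk⟫ = α * ⟪dk, g xk⟫ := by
      rw [real_inner_smul_right, real_inner_comm]
    have h2 : ‖α • dk‖ ^ 2 = α ^ 2 * ‖dk‖ ^ 2 := by
      rw [norm_smul, mul_pow, Real.norm_eq_abs, sq_abs]
    rw [h1, h2] at h
    nlinarith [h]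
  have hcconv : c (xk + α • dk) ≤ (1 - α) * c xk + α * c (xk + dk) := by
    have h := hc.2 (Set.mem_univ xk) (Set.mem_univ (xk + dk))
      (by linarith : (0:ℝ) ≤ 1 - α) hα0.le (by ring)
    have heq : (1 - α) • xk + α • (xk + dk) = xk + α • dk := by
      rw [smul_add]; module
    rwa [heq] at h
  have key1 : F x1 ≤ F xk + α * Δ + s := by
    have hcmul : μ * c (xk + α • dk) ≤ μ * ((1 - α) * c xk + α * c (xk + dk)) :=
      mul_le_mul_of_nonneg_left hcconv hμ.le
    rw [hx1, hF, hF, hΔdef]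
    nlinarith [hfdesc, hcmul]
  have hPle : F x1 - R ≤ α * Δ + s := by linarith
  have hPge : α * Δ - s ≤ F x1 - R := by nlinarith [hlow]
  have habs : |1 - (F x1 - R) / (α * Δ)| ≤ s / (-(α * Δ)) := by
    have h1 : 1 - (F x1 - R) / (α * Δ) = (α * Δ - (F x1 - R)) / (α * Δ) := by
      rw [sub_div (α * Δ), div_self htne]
    rw [h1, abs_div, abs_of_neg ht]
    apply div_le_div_of_nonneg_right ?_ (by linarith)
    · exact abs_le.mpr ⟨by linarith, by linarith⟩
  have hν0 : 0 ≤ (F x1 - F xk) / (α * Δ) := by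
    by_contra h
    push_neg at h
    have := mul_nonpos_of_nonpos_of_nonneg h.le (abs_nonneg (1 - (F x1 - R) / (α * Δ)))
    linarith
  have key2 : θ ≤ ((F x1 - F xk) / (α * Δ)) * (s / (-(α * Δ))) :=
    le_trans hsuf (mul_le_mul_of_nonneg_left habs hν0)
  have ht2 : (0:ℝ) < (α * Δ) ^ 2 := by positivity
  have hmain : θ * (α * Δ) ^ 2 ≤ (F xk - F x1) * s := by
    have h := mul_le_mul_of_nonneg_right key2 ht2.le
    have heq : (F x1 - F xk) / (α * Δ) * (s / (-(α * Δ))) * (α * Δ) ^ 2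
        = (F xk - F x1) * s := by
      rw [div_mul_div_comm, div_mul_eq_mul_div, div_eq_iff (mul_ne_zero htne (neg_ne_zero.mpr htne))]
      ring
    linarith [heq ▸ h]
  have hα2 : (0:ℝ) < α ^ 2 := by positivity
  have hmain2 : θ * Δ ^ 2 ≤ (F xk - F x1) * (L / 2) * ‖dk‖ ^ 2 := by
    have h' : α ^ 2 * (θ * Δ ^ 2) ≤ α ^ 2 * ((F xk - F x1) * (L / 2) * ‖dk‖ ^ 2) := by
      nlinarith [hmain]
    exact le_of_mul_le_mul_left h' hα2
  intro α' hle
  have hΔ2 : (0:ℝ) < Δ ^ 2 := pow_two_pos_of_ne_zero hΔ.ne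
  rw [ge_iff_le, div_le_div_iff₀ hL hΔ2]
  nlinarith [hmain2, mul_nonneg (mul_nonneg hL.le (sq_nonneg ‖dk‖))
    (by linarith : (0:ℝ) ≤ F x1 - F (xk + α' • dk))]
end

section
/- Let x* be a stationary point of F = f + μc (i.e. ∇f(x*)ᵀ(x − x*) + μ(ζ − c(x*)) ≥ 0 for all (x,ζ) in the epigraph of c). If f is strongly convex with constant L' > 0 and ∇f is L-Lipschitz, then for d_k = P_c(x_k − τ_k∇f(x_k), μτ_k) − x_k with τ_k > 0, one has ‖x_k − x*‖ ≤ ((1 + τ_k L)/(τ_k L')) ‖d_k‖. -/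
set_option maxHeartbeats 1000000


open RealInnerProductSpace

/-- Lemma 2: under strong convexity and Lipschitz gradient,
`‖x_k − x*‖ ≤ ((1 + τL)/(τL'))‖d_k‖`. -/
theorem dist_to_stationary_bound (n : ℕ) (f c : EuclideanSpace ℝ (Fin n) → ℝ)
    (g : EuclideanSpace ℝ (Fin n) → EuclideanSpace ℝ (Fin n))
    (hdiff : ∀ x, HasGradientAt f (g x) x)
    (L' : ℝ) (hL' : 0 < L') (hstr : ∀ x y, ⟪g x - g y, x - y⟫ ≥ L' * ‖x - y‖ ^ 2)
    (L : ℝ) (hL : 0 < L) (hlip : ∀ x y, ‖g x - g y‖ ≤ L * ‖x - y‖)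
    (hc : ConvexOn ℝ Set.univ c) (μ : ℝ) (hμ : 0 < μ) (τ : ℝ) (hτ : 0 < τ)
    (xstar : EuclideanSpace ℝ (Fin n))
    (hopt : ∀ x : EuclideanSpace ℝ (Fin n), ∀ ζ : ℝ, c x ≤ ζ →
      ⟪g xstar, x - xstar⟫ + μ * (ζ - c xstar) ≥ 0)
    (xk xplus dk : EuclideanSpace ℝ (Fin n))
    (hxplus : ∀ y, μ * τ * c xplus + (1 / 2) * ‖(xk - τ • g xk) - xplus‖ ^ 2 ≤
      μ * τ * c y + (1 / 2) * ‖(xk - τ • g xk) - y‖ ^ 2)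
    (hdk : dk = xplus - xk) :
    ‖xk - xstar‖ ≤ ((1 + τ * L) / (τ * L')) * ‖dk‖ := by
  set z := xk - τ • g xk with hz
  -- Step 1: prox variational inequality at y = xstar
  have hvi : ⟪z - xplus, xstar - xplus⟫ ≤ μ * τ * (c xstar - c xplus) := by
    set P : ℝ := ⟪z - xplus, xstar - xplus⟫ with hP
    set B : ℝ := ‖xstar - xplus‖ ^ 2 with hB
    have hB0 : 0 ≤ B := by positivity
    have key : ∀ t : ℝ, 0 < t → t ≤ 1 →
        t * P ≤ t * (μ * τ * (c xstar - c xplus)) + t ^ 2 / 2 * B := by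
      intro t ht ht1
      have hcomb := hxplus (xplus + t • (xstar - xplus))
      have hcv : c (xplus + t • (xstar - xplus)) ≤ (1 - t) * c xplus + t * c xstar := by
        have h := hc.2 (Set.mem_univ xplus) (Set.mem_univ xstar)
          (by linarith : (0:ℝ) ≤ 1 - t) (le_of_lt ht) (by ring)
        have heq : (1 - t) • xplus + t • xstar = xplus + t • (xstar - xplus) := by
          module
        rwa [heq] at h
      have hvec : z - (xplus + t • (xstar - xplus)) = (z - xplus) - t • (xstar - xplus) := by
        abel
      have hnorm : ‖z - (xplus + t • (xstar - xplus))‖ ^ 2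
          = ‖z - xplus‖ ^ 2 - 2 * t * P + t ^ 2 * B := by
        rw [hvec, norm_sub_sq_real, real_inner_smul_right, norm_smul]
        rw [hP, hB, Real.norm_eq_abs, abs_of_pos ht]
        ring
      rw [hnorm] at hcomb
      have hmu : μ * τ * c (xplus + t • (xstar - xplus))
          ≤ μ * τ * ((1 - t) * c xplus + t * c xstar) :=
        mul_le_mul_of_nonneg_left hcv (by positivity)
      nlinarith [hcomb, hmu]
    -- pass to the limit t → 0⁺ (via a contradiction with a small t)
    by_contra hcon
    push_neg at hcon
    set A : ℝ := μ * τ * (c xstar - c xplus) - P with hA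
    have hA0 : A < 0 := by simp [hA]; linarith
    rcases eq_or_lt_of_le hB0 with hBe | hBp
    · have := key 1 one_pos le_rfl
      nlinarith
    · set t : ℝ := min 1 (-A / B) with htdef
      have ht0 : 0 < t := lt_min one_pos (div_pos (by linarith) hBp)
      have ht1 : t ≤ 1 := min_le_left _ _
      have htB : t * B ≤ -A := by
        have h1 : t ≤ -A / B := min_le_right _ _
        calc t * B ≤ (-A / B) * B := mul_le_mul_of_nonneg_right h1 (le_of_lt hBp)
          _ = -A := by field_simp
      have := key t ht0 ht1
      nlinarith
  -- Step 2: optimality at x = xplus, ζ = c xplus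
  have h2 := hopt xplus (c xplus) le_rfl
  have h2' : ⟪g xstar, xplus - xstar⟫ ≥ μ * (c xstar - c xplus) := by linarith
  -- Step 3: key inequality
  have hkey : ⟪dk + τ • (g xk - g xstar), (xk - xstar) + dk⟫ ≤ 0 := by
    have hv1 : dk + τ • (g xk - g xstar) = -((z - xplus) + τ • g xstar) := by
      rw [hdk, hz]; module
    have hv2 : (xk - xstar) + dk = -(xstar - xplus) := by
      rw [hdk]; module
    rw [hv1, hv2, inner_neg_neg, inner_add_left, real_inner_smul_left]
    have hrw : ⟪g xstar, xstar - xplus⟫ = -⟪g xstar, xplus - xstar⟫ := by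
      rw [show xstar - xplus = -(xplus - xstar) by abel, inner_neg_right]
    rw [hrw]
    have hmul : τ * ⟪g xstar, xplus - xstar⟫ ≥ τ * (μ * (c xstar - c xplus)) :=
      mul_le_mul_of_nonneg_left h2' (le_of_lt hτ)
    nlinarith [hvi]
  -- Step 4: expand and combine
  have hexp : ⟪dk + τ • (g xk - g xstar), (xk - xstar) + dk⟫
      = ⟪dk, xk - xstar⟫ + ‖dk‖ ^ 2 + τ * ⟪g xk - g xstar, xk - xstar⟫
        + τ * ⟪g xk - g xstar, dk⟫ := by
    rw [inner_add_left, inner_add_right, inner_add_right, real_inner_smul_left,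
      real_inner_smul_left, real_inner_self_eq_norm_sq]
    ring
  have hstr' : ⟪g xk - g xstar, xk - xstar⟫ ≥ L' * ‖xk - xstar‖ ^ 2 := hstr xk xstar
  have hGnorm : ‖g xk - g xstar‖ ≤ L * ‖xk - xstar‖ := hlip xk xstar
  have hcs1 : |⟪dk, xk - xstar⟫| ≤ ‖dk‖ * ‖xk - xstar‖ := abs_real_inner_le_norm _ _
  have hcs2 : |⟪g xk - g xstar, dk⟫| ≤ ‖g xk - g xstar‖ * ‖dk‖ := abs_real_inner_le_norm _ _
  have habs1 : -(‖dk‖ * ‖xk - xstar‖) ≤ ⟪dk, xk - xstar⟫ := neg_le_of_abs_le hcs1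
  have habs2 : -(‖g xk - g xstar‖ * ‖dk‖) ≤ ⟪g xk - g xstar, dk⟫ := neg_le_of_abs_le hcs2
  have hd0 : (0:ℝ) ≤ ‖dk‖ := norm_nonneg _
  have ha0 : (0:ℝ) ≤ ‖xk - xstar‖ := norm_nonneg _
  have e1 : τ * ⟪g xk - g xstar, xk - xstar⟫
      ≤ -⟪dk, xk - xstar⟫ - ‖dk‖ ^ 2 - τ * ⟪g xk - g xstar, dk⟫ := by
    rw [hexp] at hkey; linarith
  have e2 : τ * (L' * ‖xk - xstar‖ ^ 2) ≤ τ * ⟪g xk - g xstar, xk - xstar⟫ :=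
    mul_le_mul_of_nonneg_left hstr' (le_of_lt hτ)
  have e3 : τ * -(‖g xk - g xstar‖ * ‖dk‖) ≤ τ * ⟪g xk - g xstar, dk⟫ :=
    mul_le_mul_of_nonneg_left habs2 (le_of_lt hτ)
  have e4 : ‖g xk - g xstar‖ * ‖dk‖ ≤ L * ‖xk - xstar‖ * ‖dk‖ :=
    mul_le_mul_of_nonneg_right hGnorm hd0
  have e5 : τ * (‖g xk - g xstar‖ * ‖dk‖) ≤ τ * (L * ‖xk - xstar‖ * ‖dk‖) :=
    mul_le_mul_of_nonneg_left e4 (le_of_lt hτ)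
  have main : τ * L' * ‖xk - xstar‖ ^ 2 ≤ (1 + τ * L) * ‖xk - xstar‖ * ‖dk‖ := by
    linarith [e1, e2, e3, e5, habs1, sq_nonneg ‖dk‖]
  rcases eq_or_lt_of_le ha0 with hae | hap
  · rw [← hae]
    positivity
  · rw [div_mul_eq_mul_div, le_div_iff₀ (by positivity)]
    nlinarith [main, hap]
end

section
/- With d_k = P_c(x_k − τ∇f(x_k), μτ) − x_k and Δ_k = d_kᵀ∇f(x_k) + μ(c(x_k + d_k) − c(x_k)), one has Δ_k ≤ −(1/(2τ))‖d_k‖² for any τ > 0; in particular, if d_k ≠ 0 then Δ_k < 0, i.e. d_k is a descent direction. -/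
open RealInnerProductSpace

/-- The proximal-gradient direction is a descent direction:
`Δ_k ≤ −(1/(2τ))‖d_k‖²`, and `Δ_k < 0` whenever `d_k ≠ 0`. -/
theorem prox_direction_descent (n : ℕ) (f c : EuclideanSpace ℝ (Fin n) → ℝ)
    (g : EuclideanSpace ℝ (Fin n) → EuclideanSpace ℝ (Fin n))
    (hdiff : ∀ x, HasGradientAt f (g x) x)
    (hc : ConvexOn ℝ Set.univ c) (μ : ℝ) (hμ : 0 < μ) (τ : ℝ) (hτ : 0 < τ)
    (xk xplus dk : EuclideanSpace ℝ (Fin n))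
    (hxplus : ∀ y, μ * τ * c xplus + (1 / 2) * ‖(xk - τ • g xk) - xplus‖ ^ 2 ≤
      μ * τ * c y + (1 / 2) * ‖(xk - τ • g xk) - y‖ ^ 2)
    (hdk : dk = xplus - xk) (Δ : ℝ)
    (hΔdef : Δ = ⟪dk, g xk⟫ + μ * (c xplus - c xk)) :
    Δ ≤ -(1 / (2 * τ)) * ‖dk‖ ^ 2 ∧ (dk ≠ 0 → Δ < 0) := by
  have h := hxplus xk
  have e1 : xk - τ • g xk - xplus = -(dk + τ • g xk) := by
    rw [hdk]; module
  have e2 : xk - τ • g xk - xk = -(τ • g xk) := by module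
  rw [e1, e2, norm_neg, norm_neg, norm_add_sq_real] at h
  have hin : ⟪dk, τ • g xk⟫ = τ * ⟪dk, g xk⟫ := real_inner_smul_right _ _ _
  have hτne : τ ≠ 0 := ne_of_gt hτ
  have key : Δ ≤ -(1 / (2 * τ)) * ‖dk‖ ^ 2 := by
    rw [hΔdef, show -(1 / (2 * τ)) * ‖dk‖ ^ 2 = (-(1/2) * ‖dk‖ ^ 2) / τ by
      field_simp, le_div_iff₀ hτ]
    nlinarith [h, hin]
  refine ⟨key, fun hne => ?_⟩
  have hpos : 0 < ‖dk‖ ^ 2 := pow_pos (norm_pos_iff.mpr hne) 2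
  have : -(1 / (2 * τ)) * ‖dk‖ ^ 2 < 0 := by
    have : 0 < 1 / (2 * τ) := by positivity
    nlinarith
  linarith
end

section
/- If x* satisfies the epigraph optimality condition ∇f(x*)ᵀ(x − x*) + μ(ζ − c(x*)) ≥ 0 for all (x,ζ) with c(x) ≤ ζ, and x_k⁺ = P_c(x_k − τ∇f(x_k), μτ), then (d_k + τ(∇f(x_k) − ∇f(x*)))ᵀ(x* − x_k⁺) ≥ 0, where d_k = x_k⁺ − x_k. -/
open RealInnerProductSpace

/-- Combining the optimality condition at `x*` with the proximal step:
`⟪d_k + τ(∇f(x_k) − ∇f(x*)), x* − x_k⁺⟫ ≥ 0`. -/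
theorem optimality_prox_ineq (n : ℕ) (f c : EuclideanSpace ℝ (Fin n) → ℝ)
    (g : EuclideanSpace ℝ (Fin n) → EuclideanSpace ℝ (Fin n))
    (hdiff : ∀ x, HasGradientAt f (g x) x)
    (hc : ConvexOn ℝ Set.univ c) (μ : ℝ) (hμ : 0 < μ) (τ : ℝ) (hτ : 0 < τ)
    (xstar : EuclideanSpace ℝ (Fin n))
    (hopt : ∀ x : EuclideanSpace ℝ (Fin n), ∀ ζ : ℝ, c x ≤ ζ →
      ⟪g xstar, x - xstar⟫ + μ * (ζ - c xstar) ≥ 0)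
    (xk xplus dk : EuclideanSpace ℝ (Fin n))
    (hxplus : ∀ y, μ * τ * c xplus + (1 / 2) * ‖(xk - τ • g xk) - xplus‖ ^ 2 ≤
      μ * τ * c y + (1 / 2) * ‖(xk - τ • g xk) - y‖ ^ 2)
    (hdk : dk = xplus - xk) :
    ⟪dk + τ • (g xk - g xstar), xstar - xplus⟫ ≥ 0 := by
  set z := xk - τ • g xk with hz
  set u := xstar - xplus with hu
  -- key proximal inequality
  have key : ⟪z - xplus, u⟫ ≤ μ * τ * (c xstar - c xplus) := by
    have hA : ∀ t : ℝ, 0 < t → t ≤ 1 →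
        ⟪z - xplus, u⟫ - μ * τ * (c xstar - c xplus) ≤ t / 2 * ‖u‖ ^ 2 := by
      intro t ht ht1
      have hconv := hc.2 (Set.mem_univ xplus) (Set.mem_univ xstar)
        (by linarith : (0:ℝ) ≤ 1 - t) ht.le (by ring)
      have h1 := hxplus ((1 - t) • xplus + t • xstar)
      have hexp : z - ((1 - t) • xplus + t • xstar) = (z - xplus) - t • u := by
        rw [hu]; module
      rw [hexp] at h1
      have hnorm : ‖(z - xplus) - t • u‖ ^ 2
          = ‖z - xplus‖ ^ 2 - 2 * (t * ⟪z - xplus, u⟫) + t ^ 2 * ‖u‖ ^ 2 := by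
        rw [norm_sub_sq_real, real_inner_smul_right, norm_smul]
        simp [abs_of_pos ht, mul_pow]
      rw [hnorm] at h1
      have hconv' : c ((1 - t) • xplus + t • xstar)
          ≤ (1 - t) * c xplus + t * c xstar := by
        simpa [smul_eq_mul] using hconv
      have hmul : μ * τ * c ((1 - t) • xplus + t • xstar)
          ≤ μ * τ * ((1 - t) * c xplus + t * c xstar) :=
        mul_le_mul_of_nonneg_left hconv' (by positivity)
      have h0 : 0 ≤ t * (μ * τ * (c xstar - c xplus) - ⟪z - xplus, u⟫ + t / 2 * ‖u‖ ^ 2) := by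
        nlinarith [h1, hmul]
      have := nonneg_of_mul_nonneg_right h0 ht
      linarith
    have hle : ∀ ε : ℝ, 0 < ε →
        ⟪z - xplus, u⟫ - μ * τ * (c xstar - c xplus) ≤ 0 + ε := by
      intro ε hε
      have hd : (0:ℝ) < ‖u‖ ^ 2 + 1 := by positivity
      set t := min 1 (ε / (‖u‖ ^ 2 + 1)) with htdef
      have ht0 : 0 < t := lt_min one_pos (by positivity)
      have ht1 : t ≤ 1 := min_le_left _ _
      have h2 : t / 2 * ‖u‖ ^ 2 ≤ ε := by
        have h3 : t ≤ ε / (‖u‖ ^ 2 + 1) := min_le_right _ _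
        have h4 : t * (‖u‖ ^ 2 + 1) ≤ ε := (le_div_iff₀ hd).mp h3
        nlinarith [ht0]
      have := hA t ht0 ht1
      linarith
    have := le_of_forall_pos_le_add hle
    linarith
  -- optimality at xstar applied to (xplus, c xplus)
  have hop := hopt xplus (c xplus) le_rfl
  have hrw : (xplus - xstar : EuclideanSpace ℝ (Fin n)) = -u := by rw [hu]; module
  rw [hrw, inner_neg_right] at hop
  -- rewrite the key inequality
  have hz2 : z - xplus = -dk - τ • g xk := by rw [hz, hdk]; module
  rw [hz2, inner_sub_left, inner_neg_left, real_inner_smul_left] at key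
  rw [inner_add_left, real_inner_smul_left, inner_sub_left]
  have hopτ : τ * (μ * (c xplus - c xstar)) ≥ τ * (-(- ⟪g xstar, u⟫)) := by
    have : -⟪g xstar, u⟫ + μ * (c xplus - c xstar) ≥ 0 := hop
    nlinarith [hτ.le]
  nlinarith [key, hopτ, hτ.le]
end
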